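/- If A and B are nonempty subsets of a finite abelian group G, then |A+B| ≥ min{p(G), |A|+|B|-1}. -/

import Mathlib

open Pointwise

/-- `p(G)`: the smallest prime divisor of `|G|`, or `∞` if `G` is trivial. -/
noncomputable def pAdd (G : Type*) [AddGroup G] : ℕ∞ :=
  if Nat.card G = 1 then ⊤ else (Nat.card G).minFac

lemma pAdd_le_minOrder (G : Type*) [AddGroup G] [Fintype G] :
    pAdd G ≤ AddMonoid.minOrder G := by
  unfold pAdd
  split_ifs with h
  · have : Subsingleton G := by
      rw [Nat.card_eq_fintype_card] at h
      exact Fintype.card_le_one_iff_subsingleton.mp h.le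
    rw [AddMonoid.le_minOrder]
    intro a ha _
    exact absurd (Subsingleton.elim a 0) ha
  · rw [AddMonoid.le_minOrder]
    intro a ha _
    have h1 : 1 < addOrderOf a := by
      have h0 := addOrderOf_pos a
      have h2 : addOrderOf a ≠ 1 := fun h'' => ha (by simpa using AddMonoid.addOrderOf_eq_one_iff.mp h'')
      omega
    exact_mod_cast Nat.minFac_le_of_dvd h1
      ((addOrderOf_dvd_card).trans (by rw [Nat.card_eq_fintype_card]))

theorem karolyi_abelian (G : Type*) [AddCommGroup G] [Fintype G] [DecidableEq G]
    (A B : Finset G) (hA : A.Nonempty) (hB : B.Nonempty) :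
    min (pAdd G) ((A.card + B.card - 1 : ℕ) : ℕ∞) ≤ ((A + B).card : ℕ∞) := by
  calc min (pAdd G) ((A.card + B.card - 1 : ℕ) : ℕ∞)
      ≤ min (AddMonoid.minOrder G) ((A.card + B.card - 1 : ℕ) : ℕ∞) :=
        min_le_min (pAdd_le_minOrder G) le_rfl
    _ ≤ _ := cauchy_davenport_minOrder_add hA hB
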